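/- The triple integral over the unit cube \int_0^1 \int_0^1 \int_0^1 \frac{X_1(1-X_1)\,X_2(1-X_2)\,X_3(1-X_3)}{\big(1 - X_3 (1 - X_1 X_2)\big)^2}\, dX_1\,dX_2\,dX_3 = -12 + 10\,\zeta(3). -/

import Mathlib

open Real Set MeasureTheory



lemma mom_pow (n : ℕ) : ∫ x in Ioo (0:ℝ) 1, x ^ n = 1/(n+1) := by
  rw [← MeasureTheory.integral_Ioc_eq_integral_Ioo, ← intervalIntegral.integral_of_le zero_le_one,
    integral_pow]
  simp

lemma integrableOn_pow_neg_log (n : ℕ) :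
    IntegrableOn (fun x => x ^ n * (-Real.log x)) (Ioo (0:ℝ) 1) := by
  have hmeas : AEStronglyMeasurable (fun x : ℝ => x ^ n * (-Real.log x))
      (volume.restrict (Ioo (0:ℝ) 1)) := by
    refine (Measurable.aestronglyMeasurable ?_)
    exact (measurable_id.pow_const n).mul Real.measurable_log.neg
  have hint : IntegrableOn (fun x : ℝ => 2 * x ^ (-(1/2 : ℝ))) (Ioo (0:ℝ) 1) := by
    have : IntervalIntegrable (fun x : ℝ => x ^ (-(1/2):ℝ)) volume 0 1 :=
      intervalIntegral.intervalIntegrable_rpow' (by norm_num)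
    have := (this.1).const_mul 2
    exact (integrableOn_Ioc_iff_integrableOn_Ioo).mp this
  refine Integrable.mono hint hmeas ?_
  filter_upwards [ae_restrict_mem measurableSet_Ioo] with x hx
  have hx0 : 0 < x := hx.1
  have hx1 : x ≤ 1 := hx.2.le
  have hlog : 0 ≤ -Real.log x := by
    simpa using Real.log_nonpos hx0.le hx1
  have hxn : x ^ n ≤ 1 := pow_le_one₀ hx0.le hx1
  have h1 : x ^ n * (-Real.log x) ≤ -Real.log x := by
    nlinarith
  have h2 : -Real.log x ≤ 2 * x ^ (-(1/2):ℝ) := by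
    have hr : Real.log (x ^ (-(1/2):ℝ)) ≤ x ^ (-(1/2):ℝ) - 1 :=
      Real.log_le_sub_one_of_pos (Real.rpow_pos_of_pos hx0 _)
    rw [Real.log_rpow hx0] at hr
    have : (0:ℝ) < x ^ (-(1/2):ℝ) := Real.rpow_pos_of_pos hx0 _
    nlinarith
  have h3 : 0 ≤ x ^ n * (-Real.log x) := by positivity
  rw [Real.norm_of_nonneg h3, Real.norm_of_nonneg (by positivity)]
  exact h1.trans h2

lemma mom_neg_log (n : ℕ) : ∫ x in Ioo (0:ℝ) 1, x ^ n * (-Real.log x) = 1/(n+1)^2 := by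
  have hint : IntervalIntegrable (fun x => x ^ n * (-Real.log x)) volume 0 1 := by
    rw [intervalIntegrable_iff_integrableOn_Ioo_of_le zero_le_one]
    exact integrableOn_pow_neg_log n
  have hderiv : ∀ x ∈ Ioo (0:ℝ) 1,
      HasDerivAt (fun x : ℝ => x^(n+1)/((n:ℝ)+1)^2 - x^(n+1) * Real.log x / ((n:ℝ)+1))
        (x ^ n * (-Real.log x)) x := by
    intro x hx
    have h1 : HasDerivAt (fun x : ℝ => x^(n+1)) (((n:ℝ)+1) * x ^ n) x := by
      simpa using hasDerivAt_pow (n+1) x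
    have hlog : HasDerivAt Real.log x⁻¹ x := Real.hasDerivAt_log hx.1.ne'
    have h2 : HasDerivAt (fun x : ℝ => x^(n+1) * Real.log x)
        (((n:ℝ)+1) * x ^ n * Real.log x + x^(n+1) * x⁻¹) x := h1.mul hlog
    have := ((h1.div_const (((n:ℝ)+1)^2)).sub (h2.div_const ((n:ℝ)+1)))
    convert this using 1
    · rfl
    · rfl
    · rfl
    have hn : ((n:ℝ)+1) ≠ 0 := by positivity
    field_simp [hx.1.ne']
    ring
  have hlim0 : Filter.Tendsto (fun x : ℝ => x^(n+1)/((n:ℝ)+1)^2 - x^(n+1) * Real.log x / ((n:ℝ)+1))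
      (nhdsWithin 0 (Ioi 0)) (nhds 0) := by
    have h1 : Filter.Tendsto (fun x : ℝ => Real.log x * x ^ ((n:ℝ)+1))
        (nhdsWithin 0 (Ioi 0)) (nhds 0) := tendsto_log_mul_rpow_nhdsGT_zero (by positivity)
    have h2 : Filter.Tendsto (fun x : ℝ => x^(n+1) * Real.log x)
        (nhdsWithin 0 (Ioi 0)) (nhds 0) := by
      refine h1.congr' ?_
      filter_upwards [self_mem_nhdsWithin] with x (hx : (0:ℝ) < x)
      rw [← Real.rpow_natCast x (n+1)]
      push_cast
      ring
    have h3 : Filter.Tendsto (fun x : ℝ => x^(n+1)) (nhdsWithin 0 (Ioi 0)) (nhds 0) := by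
      have := (continuous_pow (n+1)).tendsto (0:ℝ)
      simp only [zero_pow (Nat.succ_ne_zero n)] at this
      exact this.mono_left nhdsWithin_le_nhds
    have := (h3.div_const (((n:ℝ)+1)^2)).sub (h2.div_const ((n:ℝ)+1))
    simpa using this
  have hlim1 : Filter.Tendsto (fun x : ℝ => x^(n+1)/((n:ℝ)+1)^2 - x^(n+1) * Real.log x / ((n:ℝ)+1))
      (nhdsWithin 1 (Iio 1)) (nhds (1/((n:ℝ)+1)^2)) := by
    have hc : ContinuousAt (fun x : ℝ => x^(n+1)/((n:ℝ)+1)^2 - x^(n+1) * Real.log x / ((n:ℝ)+1)) 1 := by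
      have hn : (((n:ℝ)+1)^2) ≠ 0 := by positivity
      fun_prop (disch := norm_num)
    have := hc.continuousWithinAt (s := Iio 1)
    simpa using this.tendsto
  have := intervalIntegral.integral_eq_sub_of_hasDerivAt_of_tendsto (f' := fun x => x ^ n * (-Real.log x))
    (by norm_num : (0:ℝ) < 1) hderiv hint hlim0 hlim1
  rw [← MeasureTheory.integral_Ioc_eq_integral_Ioo, ← intervalIntegral.integral_of_le zero_le_one]
  simpa using this


noncomputable def Kf (z : ℝ) : ℝ := (-Real.log z) * (2/(1-z)^3 - 1/(1-z)^2) - 2/(1-z)^2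

lemma hasSum_A {z : ℝ} (hz : |z| < 1) :
    HasSum (fun n : ℕ => ((n:ℝ)+1) * z^n) (1/(1-z)^2) := by
  have h := hasSum_choose_mul_geometric_of_norm_lt_one (𝕜 := ℝ) 1 (by simpa using hz)
  have : (fun n : ℕ => (((n+1).choose 1 : ℕ) : ℝ) * z^n) = fun n : ℕ => ((n:ℝ)+1) * z^n := by
    funext n; rw [Nat.choose_one_right]; push_cast; ring
  rw [this] at h
  simpa using h

lemma hasSum_B {z : ℝ} (hz : |z| < 1) :
    HasSum (fun n : ℕ => (((n:ℝ)+1)*((n:ℝ)+2)/2) * z^n) (1/(1-z)^3) := by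
  have h := hasSum_choose_mul_geometric_of_norm_lt_one (𝕜 := ℝ) 2 (by simpa using hz)
  have : (fun n : ℕ => (((n+2).choose 2 : ℕ) : ℝ) * z^n)
      = fun n : ℕ => (((n:ℝ)+1)*((n:ℝ)+2)/2) * z^n := by
    funext n
    rw [Nat.cast_choose_two]
    push_cast; ring_nf
  rw [this] at h
  simpa using h

lemma hasSum_C {z : ℝ} (hz : |z| < 1) :
    HasSum (fun n : ℕ => (((n:ℝ)+1)^2) * z^n) (2/(1-z)^3 - 1/(1-z)^2) := by
  have h := ((hasSum_B hz).mul_left 2).sub (hasSum_A hz)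
  have : (fun n : ℕ => 2 * ((((n:ℝ)+1)*((n:ℝ)+2)/2) * z^n) - ((n:ℝ)+1) * z^n)
      = fun n : ℕ => (((n:ℝ)+1)^2) * z^n := by
    funext n; ring
  rw [this] at h
  convert h using 1
  · rfl
  ring

lemma hasSum_K {z : ℝ} (hz : z ∈ Ioo (0:ℝ) 1) :
    HasSum (fun n : ℕ => ((((n:ℝ)+1)^2 * (-Real.log z) - 2*((n:ℝ)+1)) * z^n)) (Kf z) := by
  have hz' : |z| < 1 := by rw [abs_lt]; constructor <;> [linarith [hz.1]; exact hz.2]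
  have h := ((hasSum_C hz').mul_left (-Real.log z)).sub ((hasSum_A hz').mul_left 2)
  have : (fun n : ℕ => (-Real.log z) * ((((n:ℝ)+1)^2) * z^n) - 2 * (((n:ℝ)+1) * z^n))
      = fun n : ℕ => ((((n:ℝ)+1)^2 * (-Real.log z) - 2*((n:ℝ)+1)) * z^n) := by
    funext n; ring
  rw [this] at h
  convert h using 1
  · rfl
  simp [Kf]
  ring



lemma denom_pos {z x : ℝ} (hz : z ∈ Ioo (0:ℝ) 1) (hx : x ∈ Icc (0:ℝ) 1) :
    0 < 1 - x*(1-z) := by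
  nlinarith [hz.1, hz.2, hx.1, hx.2]

lemma inner_x3 {z : ℝ} (hz : z ∈ Ioo (0:ℝ) 1) :
    ∫ x in (0:ℝ)..1, x*(1-x)/(1 - x*(1-z))^2 = Kf z := by
  have h1z : (1:ℝ) - z ≠ 0 := by have := hz.2; intro h; linarith [hz.2]
  set G : ℝ → ℝ := fun x =>
    -x/(1-z)^2 - (1+z) * Real.log (1-x*(1-z))/(1-z)^3 - z/((1-z)^3*(1-x*(1-z))) with hG
  have hderiv : ∀ x ∈ uIcc (0:ℝ) 1, HasDerivAt G (x*(1-x)/(1 - x*(1-z))^2) x := by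
    intro x hx
    rw [uIcc_of_le zero_le_one] at hx
    have hd := denom_pos hz hx
    have hdd : (1 : ℝ) - x*(1-z) ≠ 0 := hd.ne'
    have hin : HasDerivAt (fun x : ℝ => 1 - x*(1-z)) (-(1-z)) x := by
      simpa using ((hasDerivAt_id x).mul_const (1-z)).const_sub 1
    have hA : HasDerivAt (fun x : ℝ => -x/(1-z)^2) (-1/(1-z)^2) x := by
      simpa using ((hasDerivAt_id x).neg.div_const ((1-z)^2))
    have hB : HasDerivAt (fun x : ℝ => (1+z) * Real.log (1-x*(1-z))/(1-z)^3)
        ((1+z) * (-(1-z)/(1-x*(1-z)))/(1-z)^3) x := by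
      have hlog : HasDerivAt (fun x : ℝ => Real.log (1-x*(1-z))) (-(1-z)/(1-x*(1-z))) x :=
        hin.log hdd
      exact (hlog.const_mul (1+z)).div_const _
    have hC : HasDerivAt (fun x : ℝ => z/((1-z)^3*(1-x*(1-z))))
        (z * (-((1-z)^3 * -(1-z)) / ((1-z)^3*(1-x*(1-z)))^2)) x := by
      have h0 : HasDerivAt (fun x : ℝ => (1-z)^3*(1-x*(1-z))) ((1-z)^3 * -(1-z)) x :=
        hin.const_mul _
      have h1 := (h0.inv (by positivity)).const_mul z
      simpa [div_eq_mul_inv] using h1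
    have h := (hA.sub hB).sub hC
    convert h using 1
    · rfl
    · rfl
    · rfl
    field_simp
    ring
  have hint : IntervalIntegrable (fun x => x*(1-x)/(1 - x*(1-z))^2) MeasureTheory.volume 0 1 := by
    apply ContinuousOn.intervalIntegrable
    apply ContinuousOn.div
    · fun_prop
    · fun_prop
    · intro x hx
      rw [uIcc_of_le zero_le_one] at hx
      exact pow_ne_zero 2 (denom_pos hz hx).ne'
  rw [intervalIntegral.integral_eq_sub_of_hasDerivAt hderiv hint]
  have hz0 : z ≠ 0 := hz.1.ne'
  simp only [hG, Kf]
  norm_num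
  field_simp
  ring
noncomputable def bb (n : ℕ) : ℝ := 1/(((n:ℝ)+2)*((n:ℝ)+3))
noncomputable def cc (n : ℕ) : ℝ := 1/((n:ℝ)+2)^2 - 1/((n:ℝ)+3)^2

lemma int_g1 (n : ℕ) : IntegrableOn (fun x : ℝ => x^(n+1)*(1-x)) (Ioo (0:ℝ) 1) := by
  have h : Continuous (fun x : ℝ => x^(n+1)*(1-x)) := by fun_prop
  exact (integrableOn_Ioc_iff_integrableOn_Ioo).mp (h.intervalIntegrable 0 1).1

lemma int_g2 (n : ℕ) :
    IntegrableOn (fun x : ℝ => x^(n+1)*(1-x)*(-Real.log x)) (Ioo (0:ℝ) 1) := by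
  have h := (integrableOn_pow_neg_log (n+1)).sub (integrableOn_pow_neg_log (n+2))
  refine h.congr ?_
  filter_upwards with x
  simp only [Pi.sub_apply]
  ring

lemma mom_b (n : ℕ) : ∫ x in Ioo (0:ℝ) 1, x^(n+1)*(1-x) = bb n := by
  have h : ∀ x : ℝ, x^(n+1)*(1-x) = x^(n+1) - x^(n+2) := fun x => by ring
  simp_rw [h]
  have i1 : IntegrableOn (fun x : ℝ => x^(n+1)) (Ioo (0:ℝ) 1) := by
    have h : Continuous (fun x : ℝ => x^(n+1)) := by fun_prop
    exact (integrableOn_Ioc_iff_integrableOn_Ioo).mp (h.intervalIntegrable 0 1).1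
  have i2 : IntegrableOn (fun x : ℝ => x^(n+2)) (Ioo (0:ℝ) 1) := by
    have h : Continuous (fun x : ℝ => x^(n+2)) := by fun_prop
    exact (integrableOn_Ioc_iff_integrableOn_Ioo).mp (h.intervalIntegrable 0 1).1
  rw [MeasureTheory.integral_sub i1 i2, mom_pow, mom_pow, bb]
  push_cast
  have h2 : ((n:ℝ)+1+1) ≠ 0 := by positivity
  have h3 : ((n:ℝ)+2+1) ≠ 0 := by positivity
  field_simp
  ring

lemma mom_c (n : ℕ) : ∫ x in Ioo (0:ℝ) 1, x^(n+1)*(1-x)*(-Real.log x) = cc n := by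
  have h : ∀ x : ℝ, x^(n+1)*(1-x)*(-Real.log x)
      = x^(n+1)*(-Real.log x) - x^(n+2)*(-Real.log x) := fun x => by ring
  simp_rw [h]
  rw [MeasureTheory.integral_sub (integrableOn_pow_neg_log (n+1)) (integrableOn_pow_neg_log (n+2)),
    mom_neg_log, mom_neg_log, cc]
  push_cast
  ring

lemma bb_nonneg (n : ℕ) : 0 ≤ bb n := by unfold bb; positivity
lemma cc_nonneg (n : ℕ) : 0 ≤ cc n := by
  unfold cc
  rw [sub_nonneg]
  have hn : (0:ℝ) ≤ (n:ℝ) := Nat.cast_nonneg n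
  have h1 : (0:ℝ) < ((n:ℝ)+2)^2 := by positivity
  have h3 : (0:ℝ) < ((n:ℝ)+3)^2 := by positivity
  rw [div_le_div_iff₀ h3 h1]
  nlinarith
lemma bb_le (n : ℕ) : bb n ≤ 1/((n:ℝ)+1)^2 := by
  unfold bb
  have hn : (0:ℝ) ≤ (n:ℝ) := Nat.cast_nonneg n
  have h1 : (0:ℝ) < ((n:ℝ)+1)^2 := by positivity
  have h2 : ((n:ℝ)+1)^2 ≤ ((n:ℝ)+2)*((n:ℝ)+3) := by nlinarith
  have h3 : (0:ℝ) < ((n:ℝ)+2)*((n:ℝ)+3) := by positivity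
  rw [div_le_div_iff₀ h3 h1]
  nlinarith
lemma cc_le (n : ℕ) : cc n ≤ 1/((n:ℝ)+1)^2 := by
  unfold cc
  have hn : (0:ℝ) ≤ (n:ℝ) := Nat.cast_nonneg n
  have : 0 < 1/((n:ℝ)+3)^2 := by positivity
  have h : 1/((n:ℝ)+2)^2 ≤ 1/((n:ℝ)+1)^2 := by
    have h1 : (0:ℝ) < ((n:ℝ)+1)^2 := by positivity
    have h3 : (0:ℝ) < ((n:ℝ)+2)^2 := by positivity
    rw [div_le_div_iff₀ h3 h1]
    nlinarith
  linarith

lemma comb_integrable (n : ℕ) (c1 c2 : ℝ) :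
    IntegrableOn (fun x : ℝ => c1 * (x^(n+1)*(1-x)) + c2 * (x^(n+1)*(1-x)*(-Real.log x)))
      (Ioo (0:ℝ) 1) :=
  ((int_g1 n).const_mul c1).add ((int_g2 n).const_mul c2)

lemma comb_integral (n : ℕ) (c1 c2 : ℝ) :
    ∫ x in Ioo (0:ℝ) 1, (c1 * (x^(n+1)*(1-x)) + c2 * (x^(n+1)*(1-x)*(-Real.log x)))
      = c1 * bb n + c2 * cc n := by
  rw [MeasureTheory.integral_add ((int_g1 n).const_mul c1) ((int_g2 n).const_mul c2),
    MeasureTheory.integral_const_mul, MeasureTheory.integral_const_mul, mom_b, mom_c]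

lemma comb_norm_integral_le (n : ℕ) (c1 c2 : ℝ) :
    (∫ x in Ioo (0:ℝ) 1,
        ‖c1 * (x^(n+1)*(1-x)) + c2 * (x^(n+1)*(1-x)*(-Real.log x))‖)
      ≤ |c1| * bb n + |c2| * cc n := by
  have key : ∫ x in Ioo (0:ℝ) 1,
      (|c1| * (x^(n+1)*(1-x)) + |c2| * (x^(n+1)*(1-x)*(-Real.log x)))
      = |c1| * bb n + |c2| * cc n := comb_integral n _ _
  rw [← key]
  refine MeasureTheory.integral_mono_ae ((comb_integrable n c1 c2).norm)
    (comb_integrable n |c1| |c2|) ?_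
  filter_upwards [ae_restrict_mem measurableSet_Ioo] with x hx
  have hx0 : (0:ℝ) < x := hx.1
  have hx1 : x < 1 := hx.2
  have h1 : (0:ℝ) ≤ x^(n+1)*(1-x) := mul_nonneg (pow_nonneg hx0.le _) (by linarith)
  have hlog : 0 ≤ -Real.log x := by simpa using Real.log_nonpos hx0.le hx1.le
  have h2 : (0:ℝ) ≤ x^(n+1)*(1-x)*(-Real.log x) := mul_nonneg h1 hlog
  rw [Real.norm_eq_abs]
  calc |c1 * (x^(n+1)*(1-x)) + c2 * (x^(n+1)*(1-x)*(-Real.log x))|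
      ≤ |c1 * (x^(n+1)*(1-x))| + |c2 * (x^(n+1)*(1-x)*(-Real.log x))| := abs_add_le _ _
    _ = |c1| * (x^(n+1)*(1-x)) + |c2| * (x^(n+1)*(1-x)*(-Real.log x)) := by
        rw [abs_mul c1, abs_mul c2, abs_of_nonneg h1, abs_of_nonneg h2]
lemma abs_lt_one {x : ℝ} (h : x ∈ Ioo (0:ℝ) 1) : |x| < 1 := by
  rw [abs_lt]; exact ⟨by linarith [h.1], h.2⟩

lemma lvl2 {x₁ : ℝ} (h1 : x₁ ∈ Ioo (0:ℝ) 1) :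
    ∫ x in Ioo (0:ℝ) 1, (x*(1-x)) * Kf (x₁*x)
      = ∑' n : ℕ, ((((n:ℝ)+1)^2 * ((-Real.log x₁) * bb n + cc n)
          - 2*((n:ℝ)+1) * bb n) * x₁^n) := by
  have hx0 : (0:ℝ) < x₁ := h1.1
  have hx1 : x₁ < 1 := h1.2
  have hlog1 : 0 ≤ -Real.log x₁ := by simpa using Real.log_nonpos hx0.le hx1.le
  set c1 : ℕ → ℝ := fun n => (((n:ℝ)+1)^2 * (-Real.log x₁) - 2*((n:ℝ)+1)) * x₁^n with hc1
  set c2 : ℕ → ℝ := fun n => ((n:ℝ)+1)^2 * x₁^n with hc2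
  set F : ℕ → ℝ → ℝ := fun n x =>
    c1 n * (x^(n+1)*(1-x)) + c2 n * (x^(n+1)*(1-x)*(-Real.log x)) with hF
  have hpt : ∀ x ∈ Ioo (0:ℝ) 1, (x*(1-x)) * Kf (x₁*x) = ∑' n, F n x := by
    intro x hx
    have hz : x₁ * x ∈ Ioo (0:ℝ) 1 := by
      constructor
      · exact mul_pos hx0 hx.1
      · nlinarith [hx.1, hx.2]
    have hs := (hasSum_K hz).mul_left (x*(1-x))
    have heq : (fun n : ℕ => (x*(1-x)) * ((((n:ℝ)+1)^2 * (-Real.log (x₁*x))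
        - 2*((n:ℝ)+1)) * (x₁*x)^n)) = fun n => F n x := by
      funext n
      rw [Real.log_mul hx0.ne' hx.1.ne', mul_pow]
      simp only [hF, hc1, hc2]
      ring
    rw [heq] at hs
    exact hs.tsum_eq.symm
  have hF_int : ∀ n : ℕ, IntegrableOn (F n) (Ioo (0:ℝ) 1) := fun n =>
    comb_integrable n (c1 n) (c2 n)
  have habs : |x₁| < 1 := abs_lt_one h1
  have hM : Summable (fun n : ℕ => ((-Real.log x₁) + 3) * (((n:ℝ)+1)^2 * x₁^n)) :=
    ((hasSum_C habs).summable).mul_left _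
  have hF_sum : Summable (fun n : ℕ => ∫ x in Ioo (0:ℝ) 1, ‖F n x‖) := by
    refine Summable.of_nonneg_of_le (fun n => ?_) (fun n => ?_) hM
    · exact MeasureTheory.integral_nonneg (fun x => norm_nonneg _)
    · refine (comb_norm_integral_le n (c1 n) (c2 n)).trans ?_
      have hxp : (0:ℝ) < x₁^n := pow_pos hx0 n
      have hb1 : bb n ≤ 1 := (bb_le n).trans (by
        rw [div_le_one (by positivity)]
        nlinarith [Nat.cast_nonneg (α := ℝ) n])
      have hcc1 : cc n ≤ 1 := (cc_le n).trans (by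
        rw [div_le_one (by positivity)]
        nlinarith [Nat.cast_nonneg (α := ℝ) n])
      have habs1 : |c1 n| ≤ (((n:ℝ)+1)^2 * (-Real.log x₁) + 2*((n:ℝ)+1)) * x₁^n := by
        rw [hc1, abs_mul, abs_of_nonneg hxp.le]
        refine mul_le_mul_of_nonneg_right ((abs_sub _ _).trans ?_) hxp.le
        rw [abs_of_nonneg (by positivity), abs_of_nonneg (by positivity)]
      have habs2 : |c2 n| = ((n:ℝ)+1)^2 * x₁^n := by
        rw [hc2, abs_of_nonneg (by positivity)]
      have hn1 : ((n:ℝ)+1) ≤ ((n:ℝ)+1)^2 := by nlinarith [Nat.cast_nonneg (α := ℝ) n]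
      have hbbn : 0 ≤ bb n := bb_nonneg n
      have hccn : 0 ≤ cc n := cc_nonneg n
      have e1 : |c1 n| * bb n ≤ (((n:ℝ)+1)^2 * (-Real.log x₁) + 2*((n:ℝ)+1)) * x₁^n := by
        calc |c1 n| * bb n ≤ |c1 n| * 1 := by
              exact mul_le_mul_of_nonneg_left hb1 (abs_nonneg _)
          _ = |c1 n| := mul_one _
          _ ≤ _ := habs1
      have e2 : |c2 n| * cc n ≤ ((n:ℝ)+1)^2 * x₁^n := by
        calc |c2 n| * cc n ≤ |c2 n| * 1 := mul_le_mul_of_nonneg_left hcc1 (abs_nonneg _)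
          _ = |c2 n| := mul_one _
          _ = _ := habs2
      have : (((n:ℝ)+1)^2 * (-Real.log x₁) + 2*((n:ℝ)+1)) * x₁^n + ((n:ℝ)+1)^2 * x₁^n
          ≤ ((-Real.log x₁) + 3) * (((n:ℝ)+1)^2 * x₁^n) := by
        have h2 : 2*((n:ℝ)+1) * x₁^n ≤ 2*((n:ℝ)+1)^2 * x₁^n := by
          have := mul_le_mul_of_nonneg_right hn1 hxp.le
          nlinarith
        nlinarith
      linarith
  calc ∫ x in Ioo (0:ℝ) 1, (x*(1-x)) * Kf (x₁*x)
      = ∫ x in Ioo (0:ℝ) 1, ∑' n, F n x :=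
        MeasureTheory.setIntegral_congr_fun measurableSet_Ioo (fun x hx => hpt x hx)
    _ = ∑' n, ∫ x in Ioo (0:ℝ) 1, F n x :=
        (MeasureTheory.integral_tsum_of_summable_integral_norm hF_int hF_sum).symm
    _ = ∑' n : ℕ, ((((n:ℝ)+1)^2 * ((-Real.log x₁) * bb n + cc n)
          - 2*((n:ℝ)+1) * bb n) * x₁^n) := by
        refine tsum_congr (fun n => ?_)
        rw [comb_integral n (c1 n) (c2 n), hc1, hc2]
        ring
lemma sum_u : Summable (fun n : ℕ => 1/((n:ℝ)+1)^2) := by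
  have h := summable_one_div_nat_pow.mpr (le_refl 2)
  have h2 := (summable_nat_add_iff 1).mpr h
  refine h2.congr fun n => ?_
  push_cast
  ring

lemma sum_v : Summable (fun n : ℕ => 1/((n:ℝ)+1)^3) := by
  have h := summable_one_div_nat_pow.mpr (by norm_num : 2 ≤ 3)
  have h2 := (summable_nat_add_iff 1).mpr h
  refine h2.congr fun n => ?_
  push_cast
  ring

lemma lvl3 : ∫ x in Ioo (0:ℝ) 1, ((x*(1-x)) * ∑' n : ℕ,
      ((((n:ℝ)+1)^2 * ((-Real.log x) * bb n + cc n) - 2*((n:ℝ)+1) * bb n) * x^n))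
    = ∑' n : ℕ, (2*((n:ℝ)+1)^2 * bb n * cc n - 2*((n:ℝ)+1) * (bb n)^2) := by
  set d1 : ℕ → ℝ := fun n => ((n:ℝ)+1)^2 * cc n - 2*((n:ℝ)+1) * bb n with hd1
  set d2 : ℕ → ℝ := fun n => ((n:ℝ)+1)^2 * bb n with hd2
  set G : ℕ → ℝ → ℝ := fun n x =>
    d1 n * (x^(n+1)*(1-x)) + d2 n * (x^(n+1)*(1-x)*(-Real.log x)) with hG
  have hrw : ∀ x : ℝ, (x*(1-x)) * ∑' n : ℕ,
      ((((n:ℝ)+1)^2 * ((-Real.log x) * bb n + cc n) - 2*((n:ℝ)+1) * bb n) * x^n)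
      = ∑' n, G n x := by
    intro x
    rw [← tsum_mul_left]
    exact tsum_congr fun n => by simp only [hG, hd1, hd2]; ring
  have hG_int : ∀ n : ℕ, IntegrableOn (G n) (Ioo (0:ℝ) 1) := fun n =>
    comb_integrable n (d1 n) (d2 n)
  have hG_sum : Summable (fun n : ℕ => ∫ x in Ioo (0:ℝ) 1, ‖G n x‖) := by
    refine Summable.of_nonneg_of_le (fun n => ?_) (fun n => ?_) (sum_u.mul_left 4)
    · exact MeasureTheory.integral_nonneg (fun x => norm_nonneg _)
    · refine (comb_norm_integral_le n (d1 n) (d2 n)).trans ?_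
      have hn : (0:ℝ) ≤ (n:ℝ) := Nat.cast_nonneg n
      have hp : (0:ℝ) < ((n:ℝ)+1)^2 := by positivity
      have hbb := bb_nonneg n
      have hcc := cc_nonneg n
      have hbl := bb_le n
      have hcl := cc_le n
      have h1 : ((n:ℝ)+1)^2 * cc n ≤ 1 := by
        have := mul_le_mul_of_nonneg_left hcl hp.le
        rw [mul_one_div] at this
        have h2 : ((n:ℝ)+1)^2 / ((n:ℝ)+1)^2 = 1 := div_self hp.ne'
        linarith [this, h2.le]
      have h2 : 2*((n:ℝ)+1) * bb n ≤ 2 := by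
        have := mul_le_mul_of_nonneg_left hbl (by positivity : (0:ℝ) ≤ 2*((n:ℝ)+1))
        have h3 : 2*((n:ℝ)+1) * (1/((n:ℝ)+1)^2) ≤ 2 := by
          rw [mul_one_div, div_le_iff₀ hp]
          nlinarith
        linarith
      have hd1abs : |d1 n| ≤ 3 := by
        show |((n:ℝ)+1)^2 * cc n - 2*((n:ℝ)+1) * bb n| ≤ 3
        refine (abs_sub _ _).trans ?_
        rw [abs_of_nonneg (by positivity), abs_of_nonneg (by positivity)]
        linarith
      have hd2abs : |d2 n| ≤ 1 := by
        show |((n:ℝ)+1)^2 * bb n| ≤ 1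
        rw [abs_of_nonneg (by positivity)]
        have := mul_le_mul_of_nonneg_left hbl hp.le
        rw [mul_one_div] at this
        have h3 : ((n:ℝ)+1)^2 / ((n:ℝ)+1)^2 = 1 := div_self hp.ne'
        linarith
      have e1 : |d1 n| * bb n ≤ 3 * (1/((n:ℝ)+1)^2) := by
        calc |d1 n| * bb n ≤ 3 * bb n := mul_le_mul_of_nonneg_right hd1abs hbb
          _ ≤ 3 * (1/((n:ℝ)+1)^2) := by linarith
      have e2 : |d2 n| * cc n ≤ 1/((n:ℝ)+1)^2 := by
        calc |d2 n| * cc n ≤ 1 * cc n := mul_le_mul_of_nonneg_right hd2abs hcc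
          _ = cc n := one_mul _
          _ ≤ _ := hcl
      have : 4 * (1/((n:ℝ)+1)^2) = 3 * (1/((n:ℝ)+1)^2) + 1/((n:ℝ)+1)^2 := by ring
      linarith
  calc ∫ x in Ioo (0:ℝ) 1, ((x*(1-x)) * ∑' n : ℕ,
        ((((n:ℝ)+1)^2 * ((-Real.log x) * bb n + cc n) - 2*((n:ℝ)+1) * bb n) * x^n))
      = ∫ x in Ioo (0:ℝ) 1, ∑' n, G n x :=
        MeasureTheory.setIntegral_congr_fun measurableSet_Ioo (fun x _ => hrw x)
    _ = ∑' n, ∫ x in Ioo (0:ℝ) 1, G n x :=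
        (MeasureTheory.integral_tsum_of_summable_integral_norm hG_int hG_sum).symm
    _ = ∑' n : ℕ, (2*((n:ℝ)+1)^2 * bb n * cc n - 2*((n:ℝ)+1) * (bb n)^2) := by
        refine tsum_congr fun n => ?_
        rw [comb_integral n (d1 n) (d2 n), hd1, hd2]
        ring
noncomputable def uu (n : ℕ) : ℝ := 1/((n:ℝ)+1)^2
noncomputable def vv (n : ℕ) : ℝ := 1/((n:ℝ)+1)^3

lemma sum_uu : Summable uu := by
  have h := summable_one_div_nat_pow.mpr (le_refl 2)
  have h2 := (summable_nat_add_iff 1).mpr h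
  refine h2.congr fun n => ?_
  unfold uu
  push_cast
  ring

lemma sum_vv : Summable vv := by
  have h := summable_one_div_nat_pow.mpr (by norm_num : 2 ≤ 3)
  have h2 := (summable_nat_add_iff 1).mpr h
  refine h2.congr fun n => ?_
  unfold vv
  push_cast
  ring

lemma final_sum : ∑' n : ℕ, (2*((n:ℝ)+1)^2 * bb n * cc n - 2*((n:ℝ)+1) * (bb n)^2)
    = -12 + 10 * ∑' m : ℕ, 1/((m:ℝ)+1)^3 := by
  have s2a : Summable (fun n : ℕ => uu (n+1)) := (summable_nat_add_iff 1).mpr sum_uu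
  have s2b : Summable (fun n : ℕ => uu (n+2)) := (summable_nat_add_iff 2).mpr sum_uu
  have s3a : Summable (fun n : ℕ => vv (n+1)) := (summable_nat_add_iff 1).mpr sum_vv
  have s3b : Summable (fun n : ℕ => vv (n+2)) := (summable_nat_add_iff 2).mpr sum_vv
  have h0 : ∑' n, uu n = uu 0 + ∑' n, uu (n+1) := Summable.tsum_eq_zero_add sum_uu
  have h1 : ∑' n, uu (n+1) = uu 1 + ∑' n, uu (n+2) := by
    have := Summable.tsum_eq_zero_add s2a
    simpa using this
  have g0 : ∑' n, vv n = vv 0 + ∑' n, vv (n+1) := Summable.tsum_eq_zero_add sum_vv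
  have g1 : ∑' n, vv (n+1) = vv 1 + ∑' n, vv (n+2) := by
    have := Summable.tsum_eq_zero_add s3a
    simpa using this
  have hcongr : ∀ n : ℕ, (2*((n:ℝ)+1)^2 * bb n * cc n - 2*((n:ℝ)+1) * (bb n)^2)
      = ((-4)*uu (n+1) + 4*uu (n+2)) + (2*vv (n+1) + 8*vv (n+2)) := by
    intro n
    unfold bb cc uu vv
    have c2 : ((n:ℝ)+2) ≠ 0 := by positivity
    have c3 : ((n:ℝ)+3) ≠ 0 := by positivity
    push_cast
    field_simp
    ring
  rw [tsum_congr hcongr,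
    Summable.tsum_add ((s2a.mul_left (-4)).add (s2b.mul_left 4)) ((s3a.mul_left 2).add (s3b.mul_left 8)),
    Summable.tsum_add (s2a.mul_left (-4)) (s2b.mul_left 4),
    Summable.tsum_add (s3a.mul_left 2) (s3b.mul_left 8),
    tsum_mul_left, tsum_mul_left, tsum_mul_left, tsum_mul_left]
  have hvv : ∑' m : ℕ, 1/((m:ℝ)+1)^3 = ∑' n, vv n := rfl
  rw [hvv]
  have u0 : uu 0 = 1 := by norm_num [uu]
  have u1 : uu 1 = 1/4 := by norm_num [uu]
  have v0 : vv 0 = 1 := by norm_num [vv]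
  have v1 : vv 1 = 1/8 := by norm_num [vv]
  linarith [h0, h1, g0, g1]

/-- The Beukers-type integral `v₁` of the Landau–Ginzburg model of `V₁₂`:
`∫₀¹∫₀¹∫₀¹ X₁(1-X₁)X₂(1-X₂)X₃(1-X₃)/(1 - X₃(1 - X₁X₂))² dX₁dX₂dX₃ = -12 + 10ζ(3)`. -/
theorem v1_of_V12 :
    (∫ x₁ in (0 : ℝ)..1, ∫ x₂ in (0 : ℝ)..1, ∫ x₃ in (0 : ℝ)..1,
        (x₁ * (1 - x₁) * (x₂ * (1 - x₂)) * (x₃ * (1 - x₃))) /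
          (1 - x₃ * (1 - x₁ * x₂)) ^ 2)
      = -12 + 10 * ∑' m : ℕ, 1 / ((m : ℝ) + 1) ^ 3 := by
  rw [intervalIntegral.integral_of_le zero_le_one, MeasureTheory.integral_Ioc_eq_integral_Ioo]
  have outer : ∀ x₁ ∈ Ioo (0:ℝ) 1,
      (∫ x₂ in (0:ℝ)..1, ∫ x₃ in (0:ℝ)..1,
          (x₁ * (1 - x₁) * (x₂ * (1 - x₂)) * (x₃ * (1 - x₃))) /
            (1 - x₃ * (1 - x₁ * x₂)) ^ 2)
      = (x₁*(1-x₁)) * ∑' n : ℕ, ((((n:ℝ)+1)^2 * ((-Real.log x₁) * bb n + cc n)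
          - 2*((n:ℝ)+1) * bb n) * x₁^n) := by
    intro x₁ h1
    rw [intervalIntegral.integral_of_le zero_le_one, MeasureTheory.integral_Ioc_eq_integral_Ioo]
    have mid : ∀ x₂ ∈ Ioo (0:ℝ) 1,
        (∫ x₃ in (0:ℝ)..1,
            (x₁ * (1 - x₁) * (x₂ * (1 - x₂)) * (x₃ * (1 - x₃))) /
              (1 - x₃ * (1 - x₁ * x₂)) ^ 2)
        = (x₁*(1-x₁)) * ((x₂*(1-x₂)) * Kf (x₁*x₂)) := by
      intro x₂ h2
      have hz : x₁*x₂ ∈ Ioo (0:ℝ) 1 := by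
        constructor
        · exact mul_pos h1.1 h2.1
        · nlinarith [h1.1, h1.2, h2.1, h2.2]
      have hfun : (fun x₃ : ℝ => (x₁ * (1 - x₁) * (x₂ * (1 - x₂)) * (x₃ * (1 - x₃))) /
            (1 - x₃ * (1 - x₁ * x₂)) ^ 2)
          = fun x₃ => (x₁*(1-x₁)*(x₂*(1-x₂))) * (x₃*(1-x₃)/(1 - x₃*(1-x₁*x₂))^2) := by
        funext x₃; ring
      rw [hfun, intervalIntegral.integral_const_mul, inner_x3 hz]
      ring
    rw [MeasureTheory.setIntegral_congr_fun measurableSet_Ioo mid,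
      MeasureTheory.integral_const_mul, lvl2 h1]
  rw [MeasureTheory.setIntegral_congr_fun measurableSet_Ioo outer, lvl3, final_sum]
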